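/- For positive semidefinite matrices A and B with Tr(A) + Tr(B) = 1, ‖A-B‖₁² + 4‖A^{1/2}B^{1/2}‖₁² ≤ 1. That is, with T(A,B) = ‖A-B‖₁ and F(A,B) = 2‖A^{1/2}B^{1/2}‖₁, one has T² + F² ≤ 1 (Fuchs–van de Graaf with priors). -/

import Mathlib

open Matrix
open scoped ComplexOrder

/-- The positive semidefinite square root of a positive semidefinite matrix -/
noncomputable def Matrix.PosSemidef.sqrt {𝕜 : Type*} [RCLike 𝕜] {n : Type*} [Fintype n]
    [DecidableEq n] {A : Matrix n n 𝕜} (hA : A.PosSemidef) : Matrix n n 𝕜 :=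
  hA.1.eigenvectorUnitary.1 * diagonal ((↑) ∘ (Real.sqrt ·) ∘ hA.1.eigenvalues) *
  (star hA.1.eigenvectorUnitary : Matrix n n 𝕜)

/-- Trace norm `‖X‖₁ = Tr √(XᴴX)`. -/
noncomputable def traceNorm {n : Type*} [Fintype n] [DecidableEq n] (X : Matrix n n ℂ) : ℝ :=
  ((Matrix.posSemidef_conjTranspose_mul_self X).sqrt.trace).re

/-- Fractional power `A^s` of a positive semidefinite matrix, defined spectrally with the
convention `0 ^ s = 0` for all real `s`. -/
noncomputable def Matrix.PosSemidef.rpow {n : Type*} [Fintype n] [DecidableEq n]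
    {A : Matrix n n ℂ} (hA : A.PosSemidef) (s : ℝ) : Matrix n n ℂ :=
  hA.1.cfc (fun x => if x = 0 then 0 else x ^ s)

/-- Matrix logarithm of a positive semidefinite matrix, defined spectrally with the
convention `log 0 = 0` on the kernel. -/
noncomputable def Matrix.PosSemidef.log {n : Type*} [Fintype n] [DecidableEq n]
    {A : Matrix n n ℂ} (hA : A.PosSemidef) : Matrix n n ℂ :=
  hA.1.cfc Real.log

set_option linter.unusedSectionVars false
set_option maxHeartbeats 1000000

lemma Matrix.PosSemidef.posSemidef_sqrt {n : Type*} [Fintype n] [DecidableEq n]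
    {A : Matrix n n ℂ} (hA : A.PosSemidef) : hA.sqrt.PosSemidef := by
  unfold Matrix.PosSemidef.sqrt
  have h := (posSemidef_diagonal_iff (d := ((↑) ∘ (Real.sqrt ·) ∘ hA.1.eigenvalues : n → ℂ))).mpr
    (fun i => by
      rw [Function.comp_apply, RCLike.nonneg_iff]
      simp [Real.sqrt_nonneg])
  rw [Matrix.star_eq_conjTranspose]
  exact h.mul_mul_conjTranspose_same _

lemma Matrix.PosSemidef.sqrt_mul_self {n : Type*} [Fintype n] [DecidableEq n]
    {A : Matrix n n ℂ} (hA : A.PosSemidef) : hA.sqrt * hA.sqrt = A := by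
  set C : Matrix n n ℂ := hA.1.eigenvectorUnitary.1 with hC
  set E := diagonal ((↑) ∘ (Real.sqrt ·) ∘ hA.1.eigenvalues : n → ℂ) with hE
  have hCC : star C * C = 1 := by simp [C]
  have hEE : E * E = diagonal (RCLike.ofReal ∘ hA.1.eigenvalues) := by
    rw [hE, diagonal_mul_diagonal]
    congr 1; funext v
    simp only [Function.comp_apply]
    rw [← Complex.ofReal_mul, Real.mul_self_sqrt (hA.eigenvalues_nonneg v)]
    rfl
  have hs : hA.sqrt = C * E * star C := rfl
  rw [hs]
  calc C * E * star C * (C * E * star C) = C * (E * (star C * C) * E) * star C := by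
        simp only [Matrix.mul_assoc]
    _ = A := by
        rw [hCC, Matrix.mul_one, hEE]
        conv_rhs => rw [hA.1.spectral_theorem]
        rw [Unitary.conjStarAlgAut_apply]

namespace FvdG


variable {n : Type*} [Fintype n] [DecidableEq n]

/-- squared Hilbert–Schmidt norm -/
noncomputable def hsq (X : Matrix n n ℂ) : ℝ := ((Xᴴ * X).trace).re

lemma hsq_eq_sum (X : Matrix n n ℂ) : hsq X = ∑ j, ∑ i, ‖X i j‖ ^ 2 := by
  simp only [hsq, Matrix.trace, Matrix.diag, Matrix.mul_apply, Matrix.conjTranspose_apply,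
    Complex.re_sum]
  congr 1; ext j; congr 1; ext i
  rw [show star (X i j) = (starRingEnd ℂ) (X i j) from rfl, ← Complex.normSq_eq_conj_mul_self]
  rw [Complex.ofReal_re, Complex.normSq_eq_norm_sq]

lemma hsq_nonneg (X : Matrix n n ℂ) : 0 ≤ hsq X := by
  rw [hsq_eq_sum]
  positivity

lemma cs_trace (X Y : Matrix n n ℂ) :
    ((Xᴴ * Y).trace).re ≤ Real.sqrt (hsq X) * Real.sqrt (hsq Y) := by
  have h1 : ((Xᴴ * Y).trace).re ≤ ∑ j, ∑ i, ‖X i j‖ * ‖Y i j‖ := by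
    simp only [Matrix.trace, Matrix.diag, Matrix.mul_apply, Matrix.conjTranspose_apply,
      Complex.re_sum]
    refine Finset.sum_le_sum fun j _ => Finset.sum_le_sum fun i _ => ?_
    calc ((starRingEnd ℂ) (X i j) * Y i j).re ≤ ‖(starRingEnd ℂ) (X i j) * Y i j‖ :=
          Complex.re_le_norm _
      _ = ‖X i j‖ * ‖Y i j‖ := by rw [norm_mul, RCLike.norm_conj]
  refine h1.trans ?_
  have h2 : (∑ j, ∑ i, ‖X i j‖ * ‖Y i j‖) ^ 2 ≤ hsq X * hsq Y := by
    rw [hsq_eq_sum, hsq_eq_sum, ← Finset.sum_product', ← Finset.sum_product',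
      ← Finset.sum_product']
    exact Finset.sum_mul_sq_le_sq_mul_sq _ _ _
  have h3 : 0 ≤ ∑ j, ∑ i, ‖X i j‖ * ‖Y i j‖ := by positivity
  rw [← Real.sqrt_mul_self h3] at *
  rw [← Real.sqrt_mul (hsq_nonneg X)]
  exact Real.sqrt_le_sqrt (by nlinarith [h2])



variable {n : Type*} [Fintype n] [DecidableEq n]

lemma mulVec_dot (M : Matrix n n ℂ) (x y : n → ℂ) :
    star (M *ᵥ x) ⬝ᵥ (M *ᵥ y) = star x ⬝ᵥ ((Mᴴ * M) *ᵥ y) := by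
  rw [star_mulVec, dotProduct_mulVec, dotProduct_mulVec, vecMul_vecMul]

lemma polar (M : Matrix n n ℂ) :
    ∃ W : Matrix n n ℂ, W ∈ Matrix.unitaryGroup n ℂ ∧
      M = W * (Matrix.posSemidef_conjTranspose_mul_self M).sqrt := by
  set hH := Matrix.posSemidef_conjTranspose_mul_self M with hHdef
  set hHh := hH.1 with hHhdef
  set e := hHh.eigenvectorBasis with edef
  set lam := hHh.eigenvalues with lamdef
  set s : n → ℝ := fun i => Real.sqrt (lam i) with sdef
  have hlam : ∀ i, 0 ≤ lam i := fun i => hH.eigenvalues_nonneg i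
  have key3 : ∀ i j, star ⇑(e i) ⬝ᵥ ⇑(e j) = if i = j then (1:ℂ) else 0 := by
    intro i j
    rw [dotProduct_comm]
    exact orthonormal_iff_ite.mp e.orthonormal i j
  have key2 : ∀ i j, star (M *ᵥ ⇑(e i)) ⬝ᵥ (M *ᵥ ⇑(e j)) = if i = j then (lam j : ℂ) else 0 := by
    intro i j
    rw [mulVec_dot, dotProduct_mulVec, ← dotProduct_mulVec, hHh.mulVec_eigenvectorBasis,
      dotProduct_smul, key3]
    split <;> simp [Complex.real_smul, lamdef]
  -- the orthonormal family
  set v : n → EuclideanSpace ℂ n :=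
    fun i => ((s i : ℂ))⁻¹ • ((WithLp.equiv 2 (n → ℂ)).symm (M *ᵥ ⇑(e i))) with vdef
  have hsne : ∀ i, lam i ≠ 0 → (s i : ℂ) ≠ 0 := by
    intro i hi
    simp only [ne_eq, Complex.ofReal_eq_zero, sdef]
    exact ne_of_gt (Real.sqrt_pos.mpr (lt_of_le_of_ne (hlam i) (Ne.symm hi)))
  have hON : Orthonormal ℂ (Set.restrict {i | lam i ≠ 0} v) := by
    rw [orthonormal_iff_ite]
    rintro ⟨i, hi⟩ ⟨j, hj⟩
    simp only [Set.restrict_apply, vdef, inner_smul_left, inner_smul_right]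
    change inner ℂ ((s i : ℂ)⁻¹ • WithLp.toLp 2 (M *ᵥ ⇑(e i)))
      ((s j : ℂ)⁻¹ • WithLp.toLp 2 (M *ᵥ ⇑(e j))) = _
    rw [inner_smul_left, inner_smul_right, EuclideanSpace.inner_toLp_toLp, dotProduct_comm, key2]
    rcases eq_or_ne i j with rfl | hij
    · have hmul : ((s i : ℂ)) * (s i : ℂ) = (lam i : ℂ) := by
        rw [← Complex.ofReal_mul]
        norm_cast
        exact Real.mul_self_sqrt (hlam i)
      simp only [if_pos rfl, Subtype.mk.injEq, map_inv₀, Complex.conj_ofReal, if_true]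
      rw [← hmul]
      field_simp [hsne i hi]
    · simp [hij, Subtype.mk.injEq]
  obtain ⟨b, hb⟩ := hON.exists_orthonormalBasis_extension_of_card_eq
    (by simp [finrank_euclideanSpace])
  set Umat : Matrix n n ℂ := (EuclideanSpace.basisFun n ℂ).toBasis.toMatrix b.toBasis with Udef
  have hUmem : Umat ∈ Matrix.unitaryGroup n ℂ :=
    (EuclideanSpace.basisFun n ℂ).toMatrix_orthonormalBasis_mem_unitary b
  set Vmat : Matrix n n ℂ := (hHh.eigenvectorUnitary : Matrix n n ℂ) with Vdef
  have hVmem : Vmat ∈ Matrix.unitaryGroup n ℂ := hHh.eigenvectorUnitary.2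
  have hV' : Vmatᴴ * Vmat = 1 := by
    simpa [Matrix.star_eq_conjTranspose] using Matrix.mem_unitaryGroup_iff'.mp hVmem
  have hVV : Vmat * Vmatᴴ = 1 := by
    simpa [Matrix.star_eq_conjTranspose] using Matrix.mem_unitaryGroup_iff.mp hVmem
  have hU' : Umat * Umatᴴ = 1 := by
    simpa [Matrix.star_eq_conjTranspose] using Matrix.mem_unitaryGroup_iff.mp hUmem
  have claim : M * Vmat = Umat * Matrix.diagonal (fun i => (s i : ℂ)) := by
    ext j i
    rw [Matrix.mul_diagonal]
    have hLHS : (M * Vmat) j i = (M *ᵥ ⇑(e i)) j := by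
      simp [Matrix.mul_apply, Matrix.mulVec, dotProduct, Vdef, edef]
    rw [hLHS]
    have hUapp : Umat j i = b i j := rfl
    rcases eq_or_ne (lam i) 0 with hi | hi
    · have hzero : M *ᵥ ⇑(e i) = 0 := by
        rw [← dotProduct_star_self_eq_zero (v := M *ᵥ ⇑(e i)), key2, if_pos rfl, hi]
        simp
      simp [hzero, sdef, hi]
    · have hbi : b i = v i := hb i hi
      have happ : (b i) j = ((s i : ℂ))⁻¹ * (M *ᵥ ⇑(e i)) j := by rw [hbi]; rfl
      rw [hUapp, happ]
      field_simp [hsne i hi]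
  have hsqrt : hH.sqrt = Vmat * Matrix.diagonal (fun i => (s i : ℂ)) * Vmatᴴ := rfl
  refine ⟨Umat * Vmatᴴ, ?_, ?_⟩
  · rw [Matrix.mem_unitaryGroup_iff, Matrix.star_eq_conjTranspose, Matrix.conjTranspose_mul,
      Matrix.conjTranspose_conjTranspose, Matrix.mul_assoc, ← Matrix.mul_assoc Vmatᴴ, hV',
      Matrix.one_mul, hU']
  · rw [hsqrt, Matrix.mul_assoc, ← Matrix.mul_assoc Vmatᴴ, ← Matrix.mul_assoc Vmatᴴ, hV',
      Matrix.one_mul, ← Matrix.mul_assoc, ← claim, Matrix.mul_assoc, hVV, Matrix.mul_one]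

lemma trace_sqrt (M : Matrix n n ℂ) :
    (Matrix.posSemidef_conjTranspose_mul_self M).sqrt.trace =
      ((∑ i, Real.sqrt ((Matrix.posSemidef_conjTranspose_mul_self M).1.eigenvalues i) : ℝ) : ℂ) := by
  set hH := Matrix.posSemidef_conjTranspose_mul_self M
  set hHh := hH.1
  set Vmat : Matrix n n ℂ := (hHh.eigenvectorUnitary : Matrix n n ℂ) with Vdef
  have hV' : Vmatᴴ * Vmat = 1 := by
    simpa [Matrix.star_eq_conjTranspose] using
      Matrix.mem_unitaryGroup_iff'.mp hHh.eigenvectorUnitary.2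
  have hsqrt : hH.sqrt =
      Vmat * Matrix.diagonal (fun i => ((Real.sqrt (hHh.eigenvalues i) : ℝ) : ℂ)) * Vmatᴴ := rfl
  rw [hsqrt, Matrix.trace_mul_cycle, hV', Matrix.one_mul, Matrix.trace_diagonal]
  push_cast
  rfl

lemma traceNorm_eq_sum (M : Matrix n n ℂ) :
    traceNorm M =
      ∑ i, Real.sqrt ((Matrix.posSemidef_conjTranspose_mul_self M).1.eigenvalues i) := by
  rw [traceNorm, trace_sqrt, Complex.ofReal_re]

lemma traceNorm_nonneg (M : Matrix n n ℂ) : 0 ≤ traceNorm M := by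
  rw [traceNorm_eq_sum]
  positivity

lemma unitary_re_trace_le (M : Matrix n n ℂ) {U : Matrix n n ℂ}
    (hU : U ∈ Matrix.unitaryGroup n ℂ) : ((U * M).trace).re ≤ traceNorm M := by
  obtain ⟨W, hW, hMW⟩ := polar M
  set P := (Matrix.posSemidef_conjTranspose_mul_self M).sqrt with Pdef
  have hP : P.PosSemidef := (Matrix.posSemidef_conjTranspose_mul_self M).posSemidef_sqrt
  set Q := hP.sqrt with Qdef
  have hQ : Q.PosSemidef := hP.posSemidef_sqrt
  have hQh : Qᴴ = Q := hQ.1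
  have hQQ : Q * Q = P := hP.sqrt_mul_self
  set V := U * W with Vdef
  have hVV : V * Vᴴ = 1 := by
    rw [Vdef, Matrix.conjTranspose_mul]
    simpa [Matrix.star_eq_conjTranspose] using
      Matrix.mem_unitaryGroup_iff.mp (mul_mem hU hW)
  have h1 : (U * M).trace = ((Vᴴ * Q)ᴴ * Q).trace := by
    rw [Matrix.conjTranspose_mul, hQh, Matrix.conjTranspose_conjTranspose, hMW,
      ← Matrix.mul_assoc, ← Vdef, ← hQQ, ← Matrix.mul_assoc, Matrix.trace_mul_comm,
      ← Matrix.mul_assoc]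
  have h2 : hsq (Vᴴ * Q) = traceNorm M := by
    rw [hsq, Matrix.conjTranspose_mul, hQh, Matrix.conjTranspose_conjTranspose]
    have : Q * V * (Vᴴ * Q) = P := by
      rw [Matrix.mul_assoc, ← Matrix.mul_assoc V, hVV, Matrix.one_mul, hQQ]
    rw [this]
    rfl
  have h3 : hsq Q = traceNorm M := by
    rw [hsq, hQh, hQQ]
    rfl
  calc ((U * M).trace).re = (((Vᴴ * Q)ᴴ * Q).trace).re := by rw [h1]
    _ ≤ Real.sqrt (hsq (Vᴴ * Q)) * Real.sqrt (hsq Q) := cs_trace _ _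
    _ = traceNorm M := by
        rw [h2, h3, Real.mul_self_sqrt (traceNorm_nonneg M)]

lemma exists_unitary_trace (M : Matrix n n ℂ) :
    ∃ W ∈ Matrix.unitaryGroup n ℂ, (W * M).trace = ((traceNorm M : ℝ) : ℂ) := by
  obtain ⟨W, hW, hMW⟩ := polar M
  have hW' : Wᴴ * W = 1 := by
    simpa [Matrix.star_eq_conjTranspose] using Matrix.mem_unitaryGroup_iff'.mp hW
  refine ⟨Wᴴ, ?_, ?_⟩
  · rw [Matrix.mem_unitaryGroup_iff, Matrix.star_eq_conjTranspose,
      Matrix.conjTranspose_conjTranspose, hW']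
  · conv_lhs => rw [hMW, ← Matrix.mul_assoc]
    rw [hW', Matrix.one_mul, trace_sqrt, traceNorm_eq_sum]

lemma traceNorm_add_le (M N : Matrix n n ℂ) :
    traceNorm (M + N) ≤ traceNorm M + traceNorm N := by
  obtain ⟨W, hW, hWt⟩ := exists_unitary_trace (M + N)
  have : traceNorm (M + N) = ((W * (M + N)).trace).re := by rw [hWt, Complex.ofReal_re]
  rw [this, Matrix.mul_add, Matrix.trace_add, Complex.add_re]
  exact add_le_add (unitary_re_trace_le M hW) (unitary_re_trace_le N hW)

lemma traceNorm_smul (M : Matrix n n ℂ) {c : ℝ} (hc : 0 ≤ c) :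
    traceNorm (((c : ℝ) : ℂ) • M) = c * traceNorm M := by
  refine le_antisymm ?_ ?_
  · obtain ⟨W, hW, hWt⟩ := exists_unitary_trace (((c : ℝ) : ℂ) • M)
    have h0 : traceNorm (((c : ℝ) : ℂ) • M) = ((W * (((c : ℝ) : ℂ) • M)).trace).re := by
      rw [hWt, Complex.ofReal_re]
    rw [h0, Matrix.mul_smul, Matrix.trace_smul, smul_eq_mul, Complex.mul_re]
    simp only [Complex.ofReal_re, Complex.ofReal_im, zero_mul, sub_zero]
    exact mul_le_mul_of_nonneg_left (unitary_re_trace_le M hW) hc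
  · obtain ⟨W, hW, hWt⟩ := exists_unitary_trace M
    have h1 : ((W * (((c : ℝ) : ℂ) • M)).trace).re = c * traceNorm M := by
      rw [Matrix.mul_smul, Matrix.trace_smul, hWt, smul_eq_mul, ← Complex.ofReal_mul,
        Complex.ofReal_re]
    rw [← h1]
    exact unitary_re_trace_le _ hW

lemma traceNorm_conjTranspose_le (M : Matrix n n ℂ) : traceNorm Mᴴ ≤ traceNorm M := by
  obtain ⟨W, hW, hWt⟩ := exists_unitary_trace Mᴴ
  have hWH : Wᴴ ∈ Matrix.unitaryGroup n ℂ := by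
    rw [Matrix.mem_unitaryGroup_iff, Matrix.star_eq_conjTranspose,
      Matrix.conjTranspose_conjTranspose]
    simpa [Matrix.star_eq_conjTranspose] using Matrix.mem_unitaryGroup_iff'.mp hW
  have : traceNorm Mᴴ = ((Wᴴ * M).trace).re := by
    have h1 : (W * Mᴴ).trace = star ((Wᴴ * M).trace) := by
      rw [← Matrix.trace_conjTranspose, Matrix.conjTranspose_mul,
        Matrix.conjTranspose_conjTranspose]
      rw [Matrix.trace_mul_comm]
    have h2 := hWt
    rw [h1] at h2
    have : (Wᴴ * M).trace = star (((traceNorm Mᴴ : ℝ) : ℂ)) := by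
      rw [← h2, star_star]
    rw [this]
    simp
  rw [this]
  exact unitary_re_trace_le M hWH

lemma traceNorm_conjTranspose (M : Matrix n n ℂ) : traceNorm Mᴴ = traceNorm M := by
  refine le_antisymm (traceNorm_conjTranspose_le M) ?_
  have := traceNorm_conjTranspose_le Mᴴ
  rwa [Matrix.conjTranspose_conjTranspose] at this

lemma traceNorm_mul_le (X Y : Matrix n n ℂ) :
    traceNorm (Xᴴ * Y) ≤ Real.sqrt (hsq X) * Real.sqrt (hsq Y) := by
  obtain ⟨W, hW, hWt⟩ := exists_unitary_trace (Xᴴ * Y)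
  have h0 : traceNorm (Xᴴ * Y) = ((W * (Xᴴ * Y)).trace).re := by rw [hWt, Complex.ofReal_re]
  have h1 : W * (Xᴴ * Y) = (X * Wᴴ)ᴴ * Y := by
    rw [Matrix.conjTranspose_mul, Matrix.conjTranspose_conjTranspose, Matrix.mul_assoc]
  have h2 : hsq (X * Wᴴ) = hsq X := by
    rw [hsq, hsq, Matrix.conjTranspose_mul, Matrix.conjTranspose_conjTranspose]
    have : W * Xᴴ * (X * Wᴴ) = W * (Xᴴ * X) * Wᴴ := by
      rw [Matrix.mul_assoc, Matrix.mul_assoc, Matrix.mul_assoc]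
    rw [this, Matrix.trace_mul_cycle]
    have hWW : Wᴴ * W = 1 := by
      simpa [Matrix.star_eq_conjTranspose] using Matrix.mem_unitaryGroup_iff'.mp hW
    rw [← Matrix.mul_assoc, hWW, Matrix.one_mul]
  rw [h0, h1, ← h2]
  exact cs_trace _ _

end FvdG

/-- Fuchs–van de Graaf with priors: if `Tr A + Tr B = 1` for positive semidefinite `A`, `B`,
then `‖A-B‖₁² + 4‖A^{1/2}B^{1/2}‖₁² ≤ 1`, i.e. `T² + F² ≤ 1`. -/
theorem stmt4 {n : Type*} [Fintype n] [DecidableEq n]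
    {A B : Matrix n n ℂ} (hA : A.PosSemidef) (hB : B.PosSemidef)
    (htr : A.trace + B.trace = 1) :
    (traceNorm (A - B)) ^ 2 + 4 * (traceNorm (hA.sqrt * hB.sqrt)) ^ 2 ≤ 1 := by
  set C := hA.sqrt with Cdef
  set D := hB.sqrt with Ddef
  have hCh : Cᴴ = C := hA.posSemidef_sqrt.1
  have hDh : Dᴴ = D := hB.posSemidef_sqrt.1
  have hCC : C * C = A := hA.sqrt_mul_self
  have hDD : D * D = B := hB.sqrt_mul_self
  obtain ⟨W, hW, hWt⟩ := FvdG.exists_unitary_trace (D * C)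
  have hWW : Wᴴ * W = 1 := by
    simpa [Matrix.star_eq_conjTranspose] using Matrix.mem_unitaryGroup_iff'.mp hW
  set f := traceNorm (C * D) with fdef
  have hf0 : 0 ≤ f := FvdG.traceNorm_nonneg _
  have hfDC : traceNorm (D * C) = f := by
    rw [fdef, ← FvdG.traceNorm_conjTranspose (D * C), Matrix.conjTranspose_mul, hCh, hDh]
  have htrW : (W * (D * C)).trace = ((f : ℝ) : ℂ) := by rw [hWt, hfDC]
  set X := C - W * D with Xdef
  set Y := C + W * D with Ydef
  have hXh : Xᴴ = C - D * Wᴴ := by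
    rw [Xdef, Matrix.conjTranspose_sub, Matrix.conjTranspose_mul, hCh, hDh]
  have hYh : Yᴴ = C + D * Wᴴ := by
    rw [Ydef, Matrix.conjTranspose_add, Matrix.conjTranspose_mul, hCh, hDh]
  have hXY : Yᴴ * X + Xᴴ * Y = ((2 : ℝ) : ℂ) • (A - B) := by
    rw [hXh, hYh, Xdef, Ydef]
    have expand : (C + D * Wᴴ) * (C - W * D) + (C - D * Wᴴ) * (C + W * D)
        = C * C + C * C - (D * (Wᴴ * W) * D + D * (Wᴴ * W) * D) := by noncomm_ring
    rw [expand, hWW, Matrix.mul_one, hCC, hDD]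
    push_cast
    rw [two_smul]
    abel
  have t1 : (C * (W * D)).trace = ((f : ℝ) : ℂ) := by
    rw [Matrix.trace_mul_comm, Matrix.mul_assoc, htrW]
  have t2 : (D * Wᴴ * C).trace = ((f : ℝ) : ℂ) := by
    have h : D * Wᴴ * C = (C * (W * D))ᴴ := by
      rw [Matrix.conjTranspose_mul, Matrix.conjTranspose_mul, hCh, hDh]
    rw [h, Matrix.trace_conjTranspose, t1]
    exact Complex.conj_ofReal f
  have hXX : FvdG.hsq X = 1 - 2 * f := by
    rw [FvdG.hsq, hXh, Xdef]
    have expand2 : (C - D * Wᴴ) * (C - W * D)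
        = C * C + D * (Wᴴ * W) * D - (C * (W * D) + D * Wᴴ * C) := by noncomm_ring
    rw [expand2, hWW, Matrix.mul_one, hCC, hDD, Matrix.trace_sub, Matrix.trace_add,
      Matrix.trace_add, t1, t2, htr]
    simp only [Complex.sub_re, Complex.add_re, Complex.one_re, Complex.ofReal_re]
    ring
  have hYY : FvdG.hsq Y = 1 + 2 * f := by
    rw [FvdG.hsq, hYh, Ydef]
    have expand3 : (C + D * Wᴴ) * (C + W * D)
        = C * C + D * (Wᴴ * W) * D + (C * (W * D) + D * Wᴴ * C) := by noncomm_ring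
    rw [expand3, hWW, Matrix.mul_one, hCC, hDD, Matrix.trace_add, Matrix.trace_add,
      Matrix.trace_add, t1, t2, htr]
    simp only [Complex.add_re, Complex.one_re, Complex.ofReal_re]
    ring
  have hXnn := FvdG.hsq_nonneg X
  have hYnn := FvdG.hsq_nonneg Y
  have hT0 : 0 ≤ traceNorm (A - B) := FvdG.traceNorm_nonneg _
  have h2T : 2 * traceNorm (A - B) ≤ 2 * (Real.sqrt (FvdG.hsq X) * Real.sqrt (FvdG.hsq Y)) := by
    calc 2 * traceNorm (A - B) = traceNorm (((2 : ℝ) : ℂ) • (A - B)) :=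
          (FvdG.traceNorm_smul _ (by norm_num)).symm
      _ = traceNorm (Yᴴ * X + Xᴴ * Y) := by rw [hXY]
      _ ≤ traceNorm (Yᴴ * X) + traceNorm (Xᴴ * Y) := FvdG.traceNorm_add_le _ _
      _ ≤ Real.sqrt (FvdG.hsq Y) * Real.sqrt (FvdG.hsq X)
          + Real.sqrt (FvdG.hsq X) * Real.sqrt (FvdG.hsq Y) :=
          add_le_add (FvdG.traceNorm_mul_le Y X) (FvdG.traceNorm_mul_le X Y)
      _ = 2 * (Real.sqrt (FvdG.hsq X) * Real.sqrt (FvdG.hsq Y)) := by ring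
  have hTle : traceNorm (A - B) ≤ Real.sqrt (FvdG.hsq X) * Real.sqrt (FvdG.hsq Y) := by
    linarith
  have hsq_mul : (Real.sqrt (FvdG.hsq X) * Real.sqrt (FvdG.hsq Y)) ^ 2
      = FvdG.hsq X * FvdG.hsq Y := by
    rw [mul_pow, Real.sq_sqrt hXnn, Real.sq_sqrt hYnn]
  have hfin : (traceNorm (A - B)) ^ 2 ≤ FvdG.hsq X * FvdG.hsq Y := by
    rw [← hsq_mul]
    exact pow_le_pow_left₀ hT0 hTle 2
  rw [hXX, hYY] at hfin
  nlinarith [hfin]
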